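/- Let m = nq + r where q ≥ 1 and 0 < r < n, and assume n > 2r + rq. Let l be the smallest positive integer satisfying q·l² + l(2r + q) − rn ≥ 0. Then there exists a matrix A ∈ D(m,n) with tdet A ≤ nq + 2l + 1; in particular L(m,n) ≤ nq + 2l + 1. -/

import Mathlib

open Finset

/-- count of k in [a,b) with property P -/
def ubcnt (P : ℕ → Prop) [DecidablePred P] (a b : ℕ) : ℕ :=
  ((Finset.Ico a b).filter P).card

lemma ubcnt_self (P : ℕ → Prop) [DecidablePred P] (a : ℕ) : ubcnt P a a = 0 := by
  simp [ubcnt]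

lemma ubcnt_add (P : ℕ → Prop) [DecidablePred P] {a b c : ℕ} (h1 : a ≤ b) (h2 : b ≤ c) :
    ubcnt P a b + ubcnt P b c = ubcnt P a c := by
  unfold ubcnt
  rw [← Finset.card_union_of_disjoint (Finset.disjoint_filter_filter
      (Finset.Ico_disjoint_Ico_consecutive a b c)), ← Finset.filter_union,
    Finset.Ico_union_Ico_eq_Ico h1 h2]

lemma ubcnt_split (f : ℕ → ℕ) (j a b : ℕ) :
    ubcnt (fun k => f k < j + 1) a b
      = ubcnt (fun k => f k < j) a b + ubcnt (fun k => f k = j) a b := by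
  unfold ubcnt
  have h1 : (Finset.Ico a b).filter (fun k => f k < j + 1)
      = ((Finset.Ico a b).filter (fun k => f k < j)) ∪
        ((Finset.Ico a b).filter (fun k => f k = j)) := by
    rw [← Finset.filter_or]
    apply Finset.filter_congr
    intro x _
    constructor
    · intro h; omega
    · intro h; omega
  rw [h1, Finset.card_union_of_disjoint]
  apply Finset.disjoint_filter_filter'
  rw [disjoint_iff_inf_le]
  intro k hk
  simp only [Pi.inf_apply, inf_Prop_eq] at hk
  omega

lemma ubcnt_sum_fiber (f : ℕ → ℕ) {B : ℕ} (h : ∀ k, f k < B) (a b : ℕ) :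
    ∑ j ∈ Finset.range B, ubcnt (fun k => f k = j) a b = b - a := by
  unfold ubcnt
  rw [← Nat.card_Ico a b]
  exact (Finset.card_eq_sum_card_fiberwise (fun x _ => Finset.mem_range.mpr (h x))).symm

lemma ubcnt_telescope (P : ℕ → Prop) [DecidablePred P] (U : ℕ → ℕ)
    (hU : ∀ i, U i ≤ U (i + 1)) (n : ℕ) :
    ∑ i ∈ Finset.range n, ubcnt P (U i) (U (i + 1)) = ubcnt P (U 0) (U n) := by
  induction n with
  | zero => simp [ubcnt_self]
  | succ n ih =>
    have hmono : U 0 ≤ U n := by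
      clear ih
      induction n with
      | zero => exact le_refl _
      | succ n ih2 => exact le_trans ih2 (hU n)
    rw [Finset.sum_range_succ, ih, ubcnt_add P hmono (hU n)]

lemma ubcnt_le_of_mod_inj (c : ℕ) (hc : 0 < c) (P : ℕ → Prop) [DecidablePred P] {a b : ℕ}
    (h : b ≤ a + c) :
    ubcnt (fun k => P (k % c)) a b ≤ ((Finset.range c).filter P).card := by
  unfold ubcnt
  apply Finset.card_le_card_of_injOn (fun k => k % c)
  · intro k hk
    simp only [Finset.mem_coe, Finset.mem_filter, Finset.mem_Ico] at hk
    simp only [Finset.mem_coe, Finset.mem_filter, Finset.mem_range]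
    exact ⟨Nat.mod_lt _ hc, hk.2⟩
  · intro k1 hk1 k2 hk2 heq
    simp only [Finset.coe_filter, Set.mem_setOf_eq, Finset.mem_Ico] at hk1 hk2
    rcases le_total k1 k2 with hle | hle
    · have hd : c ∣ k2 - k1 := (Nat.modEq_iff_dvd' hle).mp heq
      have h2 : k2 - k1 < c := by omega
      have := Nat.eq_zero_of_dvd_of_lt hd
      omega
    · have hd : c ∣ k1 - k2 := (Nat.modEq_iff_dvd' hle).mp heq.symm
      have h2 : k1 - k2 < c := by omega
      have := Nat.eq_zero_of_dvd_of_lt hd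
      omega

lemma ubcnt_mod_le_one {c p : ℕ} (hc : 0 < c) {a b : ℕ} (h : b ≤ a + c) :
    ubcnt (fun k => k % c = p) a b ≤ 1 := by
  calc ubcnt (fun k => k % c = p) a b ≤ ((Finset.range c).filter (fun m => m = p)).card :=
        ubcnt_le_of_mod_inj c hc (fun m => m = p) h
    _ ≤ 1 := by
        apply Finset.card_le_one.mpr
        intro x hx y hy
        simp only [Finset.mem_filter] at hx hy
        omega

lemma ubcnt_mod_div_le {c q j : ℕ} (hq : 0 < q) (hc : 0 < c) {a b : ℕ} (h : b ≤ a + c) :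
    ubcnt (fun k => k % c / q = j) a b ≤ q := by
  calc ubcnt (fun k => k % c / q = j) a b
      ≤ ((Finset.range c).filter (fun m => m / q = j)).card := ubcnt_le_of_mod_inj c hc (fun m => m / q = j) h
    _ ≤ (Finset.Ico (j * q) (j * q + q)).card := by
        apply Finset.card_le_card
        intro m hm
        simp only [Finset.mem_filter, Finset.mem_range] at hm
        simp only [Finset.mem_Ico]
        constructor
        · calc j * q = m / q * q := by rw [hm.2]
            _ ≤ m := Nat.div_mul_le_self m q
        · have : m / q < j + 1 := by omega
          have h5 := (Nat.div_lt_iff_lt_mul hq).mp this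
          have h6 : (j + 1) * q = j * q + q := by ring
          omega
    _ = q := by rw [Nat.card_Ico]; omega

lemma ubcnt_mod_total {c p : ℕ} (hc : 0 < c) (hp : p < c) (r : ℕ) :
    ubcnt (fun k => k % c = p) 0 (c * r) = r := by
  induction r with
  | zero => simp [ubcnt_self]
  | succ r ih =>
    have h1 : c * (r + 1) = c * r + c := by ring
    rw [h1, ← ubcnt_add (fun k => k % c = p) (Nat.zero_le _) (Nat.le_add_right _ _), ih]
    have h2 : (Finset.Ico (c * r) (c * r + c)).filter (fun k => k % c = p) = {c * r + p} := by
      apply Finset.eq_singleton_iff_unique_mem.mpr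
      constructor
      · simp only [Finset.mem_filter, Finset.mem_Ico]
        refine ⟨⟨by omega, by omega⟩, ?_⟩
        rw [Nat.add_comm, Nat.add_mul_mod_self_left, Nat.mod_eq_of_lt hp]
      · intro x hx
        simp only [Finset.mem_filter, Finset.mem_Ico] at hx
        obtain ⟨⟨hx1, hx2⟩, hx3⟩ := hx
        have hx4 : x = (x - c * r) + c * r := by omega
        rw [hx4, Nat.add_mul_mod_self_left, Nat.mod_eq_of_lt (by omega : x - c * r < c)] at hx3
        omega
    rw [show ubcnt (fun k => k % c = p) (c * r) (c * r + c)
        = ((Finset.Ico (c * r) (c * r + c)).filter (fun k => k % c = p)).card from rfl, h2]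
    simp


/-- D(m,n): n×n matrices with nonnegative integer entries, all row and column sums equal m. -/
def IsDSM (m n : ℕ) (A : Fin n → Fin n → ℕ) : Prop :=
  (∀ i, ∑ j, A i j = m) ∧ (∀ j, ∑ i, A i j = m)

/-- tdet A: maximum of a transversal sum over all permutations. -/
def tdet {n : ℕ} (A : Fin n → Fin n → ℕ) : ℕ :=
  Finset.univ.sup fun σ : Equiv.Perm (Fin n) => ∑ i, A i (σ i)

/-- If m = nq + r, q ≥ 1, 0 < r < n, n > 2r + rq, and l is the smallest positive integer
with q·l² + l(2r + q) - rn ≥ 0, then there is A ∈ D(m,n) with tdet A ≤ nq + 2l + 1. -/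
theorem upper_bound_odd (m n q r l : ℕ) (hq : 1 ≤ q)
    (hm : m = n * q + r) (hr1 : 0 < r) (hr2 : r < n) (hbig : 2 * r + r * q < n)
    (hl : 0 < l) (hineq : r * n ≤ q * l ^ 2 + l * (2 * r + q))
    (hmin : ∀ l' : ℕ, 0 < l' → l' < l → q * l' ^ 2 + l' * (2 * r + q) < r * n) :
    ∃ A : Fin n → Fin n → ℕ, IsDSM m n A ∧ tdet A ≤ n * q + 2 * l + 1 := by
  classical
  -- Step 1 : r ≤ l
  have hrl : r ≤ l := by
    by_contra hcon
    push_neg at hcon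
    obtain ⟨s, hs⟩ : ∃ s, r = l + 1 + s := ⟨r - l - 1, by omega⟩
    subst hs
    have h0 : (l + 1 + s) * (2 * (l + 1 + s) + (l + 1 + s) * q + 1) ≤ (l + 1 + s) * n :=
      Nat.mul_le_mul_left _ (by omega)
    have hw2 : l ^ 2 + 2 * l ≤ (l + 1 + s) ^ 2 := by nlinarith
    have h7 : q * (l ^ 2 + 2 * l) ≤ q * (l + 1 + s) ^ 2 := Nat.mul_le_mul_left q hw2
    have h8 : l * (l + 1 + s) ≤ (l + 1 + s) * (l + 1 + s) := Nat.mul_le_mul_right _ (by omega)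
    have h1 : q * l ^ 2 + l * (2 * (l + 1 + s) + q) < (l + 1 + s) * n := by
      nlinarith [h0, h7, h8, hq]
    omega
  -- Step 2 : l*q + l + r ≤ n
  have hF2 : l * q + l + r ≤ n := by
    rcases eq_or_lt_of_le hrl with heq | hlt
    · subst heq
      omega
    · obtain ⟨k, hk⟩ : ∃ k, l = k + 1 := ⟨l - 1, by omega⟩
      subst hk
      have hkr : r ≤ k := by omega
      have h3 := hmin k (by omega) (by omega)
      have h4 : r * ((k + 1) * q + k + r) ≤ q * k ^ 2 + k * (2 * r + q) := by
        nlinarith [Nat.mul_le_mul_right (q * k + q + r) hkr]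
      have h5 : r * ((k + 1) * q + k + r) < r * n := lt_of_le_of_lt h4 h3
      have h6 : (k + 1) * q + k + r < n := lt_of_mul_lt_mul_left h5 (Nat.zero_le r)
      omega
  have hlq : l ≤ l * q := Nat.le_mul_of_pos_right l hq
  have hn1 : 2 * l + 1 ≤ n := by omega
  set T := (n - 2 * l - 1) * r with hTdef
  set N := n - l - 1 with hNdef
  set M := n - l with hMdef
  set C := (l + 1) * q with hCdef
  have hCpos : 0 < C := by positivity
  have hNl : l ≤ N := by omega
  have hNpos : 0 < N := by omega
  have hMpos : 0 < M := by omega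
  have hMlq : l * q + r ≤ M := by omega
  -- T + r ≤ l * C
  have hTC : T + r ≤ l * C := by
    obtain ⟨d, hd⟩ : ∃ d, n = d + 2 * l + 1 := ⟨n - 2 * l - 1, by omega⟩
    have hT' : T = d * r := by rw [hTdef]; congr 1; omega
    rw [hT', hCdef]
    nlinarith [hineq, hd]
  -- T ≤ (N - r) * l
  have hTN : T ≤ (N - r) * l := by
    have hT' : T = (N - l) * r := by rw [hTdef, hNdef]; congr 1; omega
    obtain ⟨e, he⟩ : ∃ e, N = e + r := ⟨N - r, by omega⟩
    obtain ⟨f, hf⟩ : ∃ f, N = f + l := ⟨N - l, by omega⟩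
    have h1 : N - r = e := by omega
    have h2 : N - l = f := by omega
    rw [hT', h1, h2]
    exact Nat.mul_le_mul (by omega) hrl
  -- division step facts
  have hstep : ∀ i : ℕ, (i + 1) * T / l = i * T / l + (i * T % l + T) / l := by
    intro i
    have h2 := Nat.div_add_mod (i * T) l
    have h1 : (i + 1) * T = l * (i * T / l) + (i * T % l + T) := by
      have h3 : (i + 1) * T = i * T + T := by ring
      omega
    rw [h1, Nat.mul_add_div hl]
  have hstep_leC : ∀ i : ℕ, (i * T % l + T) / l ≤ C := by
    intro i
    have h1 : i * T % l < l := Nat.mod_lt _ hl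
    have h2 : i * T % l + T < (C + 1) * l := by
      have h3 : (C + 1) * l = l * C + l := by ring
      omega
    have h4 := (Nat.div_lt_iff_lt_mul hl).mpr h2
    omega
  have hstep_leN : ∀ i : ℕ, (i * T % l + T) / l + r ≤ N := by
    intro i
    have h1 : i * T % l < l := Nat.mod_lt _ hl
    have h2 : i * T % l + T < (N - r + 1) * l := by
      have h3 : (N - r + 1) * l = (N - r) * l + l := by ring
      omega
    have h4 := (Nat.div_lt_iff_lt_mul hl).mpr h2
    omega
  -- the partial-sum functions
  set O : ℕ → ℕ := fun i => i * T / l with hOdef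
  set U : ℕ → ℕ := fun i => i * T / l + i * r with hUdef
  set V : ℕ → ℕ := fun j => ubcnt (fun k => k % C / q < j) 0 T + j * r with hVdef
  have hO0 : O 0 = 0 := by simp [hOdef]
  have hOstep : ∀ i, O (i + 1) = O i + (i * T % l + T) / l := by
    intro i; simp only [hOdef]; exact hstep i
  have hOl : O l = T := by
    simp only [hOdef]; exact Nat.mul_div_cancel_left T hl
  have hU0 : U 0 = 0 := by simp [hUdef]
  have hUstep : ∀ i, U (i + 1) = U i + ((i * T % l + T) / l + r) := by
    intro i; simp only [hUdef]; rw [hstep i]; ring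
  have hUl : U l = N * r := by
    have h1 : U l = T + l * r := by
      simp only [hUdef, Nat.mul_div_cancel_left T hl]
    rw [h1, hTdef, hNdef]
    have h2 : n - l - 1 = (n - 2 * l - 1) + l := by omega
    rw [h2, Nat.add_mul]
  have hallC : ∀ k : ℕ, k % C / q < l + 1 := by
    intro k
    have h1 : k % C < C := Nat.mod_lt _ hCpos
    rw [hCdef] at h1
    exact (Nat.div_lt_iff_lt_mul hq).mpr h1
  have hV0 : V 0 = 0 := by simp [hVdef, ubcnt]
  have hVstep : ∀ j, V (j + 1) = V j + (ubcnt (fun k => k % C / q = j) 0 T + r) := by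
    intro j
    simp only [hVdef]
    rw [ubcnt_split (fun k => k % C / q) j 0 T]
    ring
  have hVl : V (l + 1) = M * r := by
    have h1 : ubcnt (fun k => k % C / q < l + 1) 0 T = T := by
      unfold ubcnt
      rw [Finset.filter_true_of_mem (fun x _ => hallC x), Nat.card_Ico]
      omega
    simp only [hVdef, h1]
    rw [hTdef, hMdef]
    have h2 : n - l = (n - 2 * l - 1) + (l + 1) := by omega
    rw [h2, Nat.add_mul]
    ring
  have hVmono : ∀ j, V j ≤ V (j + 1) := fun j => by
    rw [hVstep j]; exact Nat.le_add_right _ _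
  have hOmono : ∀ i, O i ≤ O (i + 1) := fun i => by
    rw [hOstep i]; exact Nat.le_add_right _ _
  have hUmono : ∀ i, U i ≤ U (i + 1) := fun i => by
    rw [hUstep i]; exact Nat.le_add_right _ _
  -- entry bounds
  have he_le : ∀ i j : ℕ, ubcnt (fun k => k % C / q = j) (O i) (O (i + 1)) ≤ q := by
    intro i j
    apply ubcnt_mod_div_le hq hCpos
    rw [hOstep i]
    have := hstep_leC i
    omega
  have hγ_eq : ∀ j, ubcnt (fun k => k % C / q = j) 0 T
      = ∑ i ∈ Finset.range l, ubcnt (fun k => k % C / q = j) (O i) (O (i + 1)) := by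
    intro j
    rw [ubcnt_telescope _ O hOmono l, hO0, hOl]
  have hγ_le : ∀ j, ubcnt (fun k => k % C / q = j) 0 T ≤ l * q := by
    intro j
    rw [hγ_eq j]
    calc ∑ i ∈ Finset.range l, ubcnt (fun k => k % C / q = j) (O i) (O (i + 1))
        ≤ ∑ _i ∈ Finset.range l, q := Finset.sum_le_sum (fun i _ => he_le i j)
      _ = l * q := by simp [Finset.sum_const, Finset.card_range, mul_comm]
  have hY_le : ∀ j i', ubcnt (fun k => k % M = i') (V j) (V (j + 1)) ≤ 1 := by
    intro j i'
    apply ubcnt_mod_le_one hMpos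
    rw [hVstep j]
    have := hγ_le j
    omega
  have hX_le : ∀ i p, ubcnt (fun k => k % N = p) (U i) (U (i + 1)) ≤ 1 := by
    intro i p
    apply ubcnt_mod_le_one hNpos
    rw [hUstep i]
    have := hstep_leN i
    omega
  -- the matrix
  set A : ℕ → ℕ → ℕ := fun i j =>
    if i < l then
      (if j < l + 1 then q - ubcnt (fun k => k % C / q = j) (O i) (O (i + 1))
       else q + ubcnt (fun k => k % N = j - (l + 1)) (U i) (U (i + 1)))
    else
      (if j < l + 1 then q + ubcnt (fun k => k % M = i - l) (V j) (V (j + 1))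
       else q) with hAdef
  have hmul1 : (l + 1) * q + N * q = n * q := by
    rw [hNdef, hMdef, ← Nat.add_mul]
    congr 1
    omega
  have hmul2 : l * q + M * q = n * q := by
    rw [hMdef, ← Nat.add_mul]
    congr 1
    omega
  -- row sums
  have hrow : ∀ i, i < n → ∑ j ∈ Finset.range n, A i j = n * q + r := by
    intro i hi
    have hsplit : ∑ j ∈ Finset.range n, A i j
        = ∑ j ∈ Finset.range (l + 1), A i j + ∑ j ∈ Finset.Ico (l + 1) n, A i j := by
      rw [Finset.range_eq_Ico, ← Finset.sum_Ico_consecutive _ (Nat.zero_le (l + 1))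
        (by omega : l + 1 ≤ n), ← Finset.range_eq_Ico]
    by_cases hil : i < l
    · have h1 : ∑ j ∈ Finset.range (l + 1), A i j + (O (i + 1) - O i) = (l + 1) * q := by
        have h2 : ∀ j ∈ Finset.range (l + 1), A i j
            = q - ubcnt (fun k => k % C / q = j) (O i) (O (i + 1)) := by
          intro j hj
          simp only [hAdef]
          rw [if_pos hil, if_pos (Finset.mem_range.mp hj)]
        have h3 : ∑ j ∈ Finset.range (l + 1), ubcnt (fun k => k % C / q = j) (O i) (O (i + 1))
            = O (i + 1) - O i := ubcnt_sum_fiber (fun k => k % C / q) hallC (O i) (O (i + 1))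
        rw [Finset.sum_congr rfl h2, ← h3, ← Finset.sum_add_distrib,
          Finset.sum_congr rfl (fun j _ => Nat.sub_add_cancel (he_le i j)),
          Finset.sum_const, Finset.card_range, smul_eq_mul]
      have h4 : ∑ j ∈ Finset.Ico (l + 1) n, A i j = N * q + ((O (i + 1) - O i) + r) := by
        have h5 : ∀ j ∈ Finset.Ico (l + 1) n, A i j
            = q + ubcnt (fun k => k % N = j - (l + 1)) (U i) (U (i + 1)) := by
          intro j hj
          have hj' := Finset.mem_Ico.mp hj
          simp only [hAdef]
          rw [if_pos hil, if_neg (by omega)]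
        have h8 : U (i + 1) - U i = (O (i + 1) - O i) + r := by
          rw [hUstep i, hOstep i, Nat.add_sub_cancel_left, Nat.add_sub_cancel_left]
        have h9 : n - (l + 1) = N := by omega
        rw [Finset.sum_congr rfl h5, Finset.sum_Ico_eq_sum_range, h9]
        have h6 : ∀ p ∈ Finset.range N,
            q + ubcnt (fun k => k % N = (l + 1) + p - (l + 1)) (U i) (U (i + 1))
              = q + ubcnt (fun k => k % N = p) (U i) (U (i + 1)) := by
          intro p _
          have h7 : (l + 1) + p - (l + 1) = p := by omega
          rw [h7]
        rw [Finset.sum_congr rfl h6, Finset.sum_add_distrib, Finset.sum_const,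
          Finset.card_range, smul_eq_mul,
          ubcnt_sum_fiber (fun k => k % N) (fun k => Nat.mod_lt _ hNpos) (U i) (U (i + 1)), h8]
      have hρq : O (i + 1) - O i ≤ (l + 1) * q := by
        rw [hOstep i, Nat.add_sub_cancel_left]
        exact hCdef ▸ hstep_leC i
      omega
    · have h1 : ∑ j ∈ Finset.range (l + 1), A i j = (l + 1) * q + r := by
        have h2 : ∀ j ∈ Finset.range (l + 1), A i j
            = q + ubcnt (fun k => k % M = i - l) (V j) (V (j + 1)) := by
          intro j hj
          simp only [hAdef]
          rw [if_neg hil, if_pos (Finset.mem_range.mp hj)]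
        rw [Finset.sum_congr rfl h2, Finset.sum_add_distrib, Finset.sum_const,
          Finset.card_range, smul_eq_mul]
        congr 1
        rw [ubcnt_telescope _ V hVmono (l + 1), hV0, hVl]
        exact ubcnt_mod_total hMpos (by omega : i - l < M) r
      have h3 : ∑ j ∈ Finset.Ico (l + 1) n, A i j = N * q := by
        have h4 : ∀ j ∈ Finset.Ico (l + 1) n, A i j = q := by
          intro j hj
          have hj' := Finset.mem_Ico.mp hj
          simp only [hAdef]
          rw [if_neg hil, if_neg (by omega)]
        have h9 : n - (l + 1) = N := by omega
        rw [Finset.sum_congr rfl h4, Finset.sum_const, Nat.card_Ico, smul_eq_mul, h9]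
      omega
  -- column sums
  have hcol : ∀ j, j < n → ∑ i ∈ Finset.range n, A i j = n * q + r := by
    intro j hj
    have hsplit : ∑ i ∈ Finset.range n, A i j
        = ∑ i ∈ Finset.range l, A i j + ∑ i ∈ Finset.Ico l n, A i j := by
      rw [Finset.range_eq_Ico, ← Finset.sum_Ico_consecutive _ (Nat.zero_le l)
        (by omega : l ≤ n), ← Finset.range_eq_Ico]
    by_cases hjl : j < l + 1
    · have h1 : ∑ i ∈ Finset.range l, A i j + ubcnt (fun k => k % C / q = j) 0 T = l * q := by
        have h2 : ∀ i ∈ Finset.range l, A i j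
            = q - ubcnt (fun k => k % C / q = j) (O i) (O (i + 1)) := by
          intro i hi
          simp only [hAdef]
          rw [if_pos (Finset.mem_range.mp hi), if_pos hjl]
        rw [Finset.sum_congr rfl h2, hγ_eq j, ← Finset.sum_add_distrib,
          Finset.sum_congr rfl (fun i _ => Nat.sub_add_cancel (he_le i j)),
          Finset.sum_const, Finset.card_range, smul_eq_mul]
      have h3 : ∑ i ∈ Finset.Ico l n, A i j
          = M * q + (ubcnt (fun k => k % C / q = j) 0 T + r) := by
        have h4 : ∀ i ∈ Finset.Ico l n, A i j
            = q + ubcnt (fun k => k % M = i - l) (V j) (V (j + 1)) := by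
          intro i hi
          have hi' := Finset.mem_Ico.mp hi
          simp only [hAdef]
          rw [if_neg (by omega), if_pos hjl]
        have h9 : n - l = M := by omega
        rw [Finset.sum_congr rfl h4, Finset.sum_Ico_eq_sum_range, h9]
        have h6 : ∀ p ∈ Finset.range M,
            q + ubcnt (fun k => k % M = l + p - l) (V j) (V (j + 1))
              = q + ubcnt (fun k => k % M = p) (V j) (V (j + 1)) := by
          intro p _
          have h7 : l + p - l = p := by omega
          rw [h7]
        have h8 : V (j + 1) - V j = ubcnt (fun k => k % C / q = j) 0 T + r := by
          rw [hVstep j, Nat.add_sub_cancel_left]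
        rw [Finset.sum_congr rfl h6, Finset.sum_add_distrib, Finset.sum_const,
          Finset.card_range, smul_eq_mul,
          ubcnt_sum_fiber (fun k => k % M) (fun k => Nat.mod_lt _ hMpos) (V j) (V (j + 1)), h8]
      omega
    · have h1 : ∑ i ∈ Finset.range l, A i j = l * q + r := by
        have h2 : ∀ i ∈ Finset.range l, A i j
            = q + ubcnt (fun k => k % N = j - (l + 1)) (U i) (U (i + 1)) := by
          intro i hi
          simp only [hAdef]
          rw [if_pos (Finset.mem_range.mp hi), if_neg hjl]
        rw [Finset.sum_congr rfl h2, Finset.sum_add_distrib, Finset.sum_const,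
          Finset.card_range, smul_eq_mul]
        congr 1
        rw [ubcnt_telescope _ U hUmono l, hU0, hUl]
        exact ubcnt_mod_total hNpos (by omega : j - (l + 1) < N) r
      have h3 : ∑ i ∈ Finset.Ico l n, A i j = M * q := by
        have h4 : ∀ i ∈ Finset.Ico l n, A i j = q := by
          intro i hi
          have hi' := Finset.mem_Ico.mp hi
          simp only [hAdef]
          rw [if_neg (by omega), if_neg hjl]
        have h9 : n - l = M := by omega
        rw [Finset.sum_congr rfl h4, Finset.sum_const, Nat.card_Ico, smul_eq_mul, h9]
      omega
  -- pointwise bound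
  have hptw : ∀ i j : ℕ, A i j ≤ q + (if i < l ∨ j < l + 1 then 1 else 0) := by
    intro i j
    by_cases h1 : i < l
    · by_cases h2 : j < l + 1
      · simp only [hAdef]
        rw [if_pos h1, if_pos h2, if_pos (Or.inl h1)]
        omega
      · simp only [hAdef]
        rw [if_pos h1, if_neg h2, if_pos (Or.inl h1)]
        have := hX_le i (j - (l + 1))
        omega
    · by_cases h2 : j < l + 1
      · simp only [hAdef]
        rw [if_neg h1, if_pos h2, if_pos (Or.inr h2)]
        have := hY_le j (i - l)
        omega
      · simp only [hAdef]
        rw [if_neg h1, if_neg h2, if_neg (by omega)]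
        omega
  -- assemble
  refine ⟨fun i j => A (i : ℕ) (j : ℕ), ⟨?_, ?_⟩, ?_⟩
  · intro i
    rw [hm]
    rw [show (∑ j : Fin n, A (i : ℕ) (j : ℕ)) = ∑ j ∈ Finset.range n, A (i : ℕ) j from
      Fin.sum_univ_eq_sum_range (fun j => A (i : ℕ) j) n]
    exact hrow i i.isLt
  · intro j
    rw [hm]
    rw [show (∑ i : Fin n, A (i : ℕ) (j : ℕ)) = ∑ i ∈ Finset.range n, A i (j : ℕ) from
      Fin.sum_univ_eq_sum_range (fun i => A i (j : ℕ)) n]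
    exact hcol j j.isLt
  · unfold tdet
    apply Finset.sup_le
    intro σ _
    have hcard : (Finset.univ.filter
        (fun i : Fin n => (i : ℕ) < l ∨ ((σ i : ℕ)) < l + 1)).card ≤ 2 * l + 1 := by
      have hsub : Finset.univ.filter (fun i : Fin n => (i : ℕ) < l ∨ ((σ i : ℕ)) < l + 1)
          ⊆ Finset.univ.filter (fun i : Fin n => (i : ℕ) < l)
            ∪ Finset.univ.filter (fun i : Fin n => ((σ i : ℕ)) < l + 1) := by
        intro x hx
        simp only [Finset.mem_filter, Finset.mem_union, Finset.mem_univ, true_and] at hx ⊢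
        exact hx
      have hc1 : (Finset.univ.filter (fun i : Fin n => (i : ℕ) < l)).card ≤ l := by
        have h10 := Finset.card_le_card_of_injOn
          (s := Finset.univ.filter (fun i : Fin n => (i : ℕ) < l))
          (t := Finset.range l) (fun i : Fin n => (i : ℕ))
          (fun x hx => Finset.mem_range.mpr (Finset.mem_filter.mp hx).2)
          (fun x _ y _ h => Fin.val_injective h)
        simpa using h10
      have hc2 : (Finset.univ.filter (fun i : Fin n => ((σ i : ℕ)) < l + 1)).card ≤ l + 1 := by
        have h10 := Finset.card_le_card_of_injOn
          (s := Finset.univ.filter (fun i : Fin n => ((σ i : ℕ)) < l + 1))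
          (t := Finset.range (l + 1)) (fun i : Fin n => ((σ i : ℕ)))
          (fun x hx => Finset.mem_range.mpr (Finset.mem_filter.mp hx).2)
          (fun x _ y _ h => σ.injective (Fin.val_injective h))
        simpa using h10
      calc (Finset.univ.filter
          (fun i : Fin n => (i : ℕ) < l ∨ ((σ i : ℕ)) < l + 1)).card
          ≤ (Finset.univ.filter (fun i : Fin n => (i : ℕ) < l)
              ∪ Finset.univ.filter (fun i : Fin n => ((σ i : ℕ)) < l + 1)).card :=
            Finset.card_le_card hsub
        _ ≤ (Finset.univ.filter (fun i : Fin n => (i : ℕ) < l)).card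
            + (Finset.univ.filter (fun i : Fin n => ((σ i : ℕ)) < l + 1)).card :=
            Finset.card_union_le _ _
        _ ≤ 2 * l + 1 := by omega
    calc ∑ i : Fin n, A (i : ℕ) ((σ i : ℕ))
        ≤ ∑ i : Fin n, (q + (if (i : ℕ) < l ∨ ((σ i : ℕ)) < l + 1 then 1 else 0)) :=
          Finset.sum_le_sum (fun i _ => hptw (i : ℕ) ((σ i : ℕ)))
      _ = n * q + ∑ i : Fin n, (if (i : ℕ) < l ∨ ((σ i : ℕ)) < l + 1 then 1 else 0) := by
          rw [Finset.sum_add_distrib, Finset.sum_const, Finset.card_univ, Fintype.card_fin,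
            smul_eq_mul]
      _ ≤ n * q + (2 * l + 1) := by
          have := (Finset.card_filter
            (fun i : Fin n => (i : ℕ) < l ∨ ((σ i : ℕ)) < l + 1) Finset.univ).symm
          omega
      _ = n * q + 2 * l + 1 := by omega
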